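/- Let G be an undirected graph and k ∈ ℕ. Let conf = (v_1,…,v_k) and conf' = (v_1',…,v_k') be two (G,k)-configurations. Then the pair (conf, conf') is a (k−1)-transition if and only if both of the following conditions hold: (1) for every 1 ≤ i ≤ k−1, the vertex v_i' does not belong to {v_1, v_2, …, v_i}; and (2) v_k' = v_1. -/
import Mathlib


variable {V : Type*}

/-- A `(G,k)`-configuration: a tuple of `k` pairwise-distinct vertices of `G` in which
consecutive vertices are adjacent (0-indexed rendering of `(v_1, …, v_k)`). -/
def IsConfig (G : SimpleGraph V) (k : ℕ) (c : Fin k → V) : Prop :=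
  Function.Injective c ∧
    ∀ (i : ℕ) (h : i + 1 < k), G.Adj (c ⟨i, by omega⟩) (c ⟨i + 1, h⟩)

/-- A 1-transition between two `k`-tuples: the new head `v_1'` differs from
`v_1, …, v_{k-1}`, and `v_i' = v_{i-1}` for `2 ≤ i ≤ k`. -/
def OneTrans (k : ℕ) (c c' : Fin k → V) : Prop :=
  (∀ (i : ℕ) (h : i + 1 < k), c' ⟨0, by omega⟩ ≠ c ⟨i, by omega⟩) ∧
    ∀ (i : ℕ) (h : i + 1 < k), c' ⟨i + 1, h⟩ = c ⟨i, by omega⟩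

/-- An `ℓ`-transition: a sequence of `ℓ+1` `(G,k)`-configurations starting at `c`,
ending at `c'`, in which every consecutive pair is a 1-transition. -/
def IsTransition (G : SimpleGraph V) (k ℓ : ℕ) (c c' : Fin k → V) : Prop :=
  ∃ seq : Fin (ℓ + 1) → Fin k → V,
    seq 0 = c ∧ seq (Fin.last ℓ) = c' ∧
      (∀ i, IsConfig G k (seq i)) ∧
      ∀ (i : ℕ) (h : i + 1 < ℓ + 1), OneTrans k (seq ⟨i, by omega⟩) (seq ⟨i + 1, h⟩)

/-- `c` can reach `c'` if `(c, c')` is an `ℓ`-transition for some `ℓ`. -/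
def Reach (G : SimpleGraph V) (k : ℕ) (c c' : Fin k → V) : Prop :=
  ∃ ℓ : ℕ, IsTransition G k ℓ c c'

lemma fin_congr {n : ℕ} {α : Sort*} (f : Fin n → α) {x y : ℕ} (hx : x < n) (hy : y < n)
    (h : x = y) : f ⟨x, hx⟩ = f ⟨y, hy⟩ := by subst h; rfl

/-- The canonical witness sequence for the backward direction of `stmt1`. -/
def shiftSeq (k : ℕ) (c c' : Fin k → V) : Fin (k - 1 + 1) → Fin k → V :=
  fun t j => if h : (t : ℕ) ≤ (j : ℕ)
    then c ⟨(j : ℕ) - (t : ℕ), by have := j.isLt; omega⟩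
    else c' ⟨(j : ℕ) + (k - 1) - (t : ℕ), by have := j.isLt; have := t.isLt; omega⟩

lemma shiftSeq_pos (k : ℕ) (c c' : Fin k → V) (t : ℕ) (ht : t < k - 1 + 1)
    (j : ℕ) (hj : j < k) (h : t ≤ j) :
    shiftSeq k c c' ⟨t, ht⟩ ⟨j, hj⟩ = c ⟨j - t, by omega⟩ := dif_pos h

lemma shiftSeq_neg (k : ℕ) (c c' : Fin k → V) (t : ℕ) (ht : t < k - 1 + 1)
    (j : ℕ) (hj : j < k) (h : j < t) :
    shiftSeq k c c' ⟨t, ht⟩ ⟨j, hj⟩ = c' ⟨j + (k - 1) - t, by omega⟩ :=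
  dif_neg (show ¬ t ≤ j by omega)


/-- Corollary: characterization of `(k-1)`-transitions.
`(conf, conf')` is a `(k-1)`-transition iff (1) for every `1 ≤ i ≤ k-1`,
`v_i' ∉ {v_1, …, v_i}`, and (2) `v_k' = v_1`.
Indices below are the paper's 1-indexed ones; `c ⟨i - 1, _⟩` is `v_i`. -/
theorem stmt1 (G : SimpleGraph V) (k : ℕ) (hk : 1 ≤ k)
    (c c' : Fin k → V) (hc : IsConfig G k c) (hc' : IsConfig G k c') :
    IsTransition G k (k - 1) c c' ↔
      ((∀ (i : ℕ) (_hi1 : 1 ≤ i) (_hi2 : i ≤ k - 1) (j : ℕ) (_hj1 : 1 ≤ j) (_hj2 : j ≤ i),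
          c' ⟨i - 1, by omega⟩ ≠ c ⟨j - 1, by omega⟩) ∧
        c' ⟨k - 1, by omega⟩ = c ⟨0, by omega⟩) := by
  constructor
  · rintro ⟨seq, h0, hlast, hconf, htrans⟩
    have hlast' : seq ⟨k - 1, by omega⟩ = c' := by
      have e : (Fin.last (k-1)) = (⟨k - 1, by omega⟩ : Fin (k - 1 + 1)) := rfl
      rw [← e, hlast]
    -- Lemma A : seq t j = c (j - t) for t ≤ j
    have lemA : ∀ t, ∀ (ht : t < k), ∀ j, ∀ (hj : j < k), t ≤ j →
        seq ⟨t, by omega⟩ ⟨j, hj⟩ = c ⟨j - t, by omega⟩ := by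
      intro t
      induction t with
      | zero =>
        intro ht j hj _
        have h0' : seq ⟨0, by omega⟩ = c := h0
        rw [h0']
        exact fin_congr c hj (by omega) (by omega)
      | succ t ih =>
        intro ht j hj htj
        have e1 : (⟨j, hj⟩ : Fin k) = ⟨(j - 1) + 1, by omega⟩ := Fin.ext (by simp; omega)
        rw [e1, (htrans t (by omega)).2 (j - 1) (by omega)]
        rw [ih (by omega) (j - 1) (by omega) (by omega)]
        exact fin_congr c (by omega) (by omega) (by omega)
    -- Lemma B : seq (t + d) d = seq t 0
    have lemB : ∀ d, ∀ (hd : d < k), ∀ t, ∀ (htd : t + d ≤ k - 1),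
        seq ⟨t + d, by omega⟩ ⟨d, hd⟩ = seq ⟨t, by omega⟩ ⟨0, by omega⟩ := by
      intro d
      induction d with
      | zero =>
        intro hd t ht
        exact congrFun (fin_congr seq (by omega) (by omega) rfl) ⟨0, by omega⟩
      | succ d ih =>
        intro hd t ht
        have e1 : seq ⟨t + (d+1), by omega⟩ = seq ⟨t + d + 1, by omega⟩ :=
          fin_congr seq (by omega) (by omega) (by omega)
        rw [e1, (htrans (t + d) (by omega)).2 d (by omega), ih (by omega) t (by omega)]
    constructor
    · intro i hi1 hi2 j hj1 hj2
      have hk2 : 2 ≤ k := by omega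
      have hab : j - 1 ≤ i - 1 := by omega
      have hak : i - 1 ≤ k - 2 := by omega
      set a := i - 1 with ha
      set b := j - 1 with hb
      have e1 : c' ⟨i - 1, by omega⟩ = seq ⟨k - 1, by omega⟩ ⟨a, by omega⟩ := by
        rw [hlast']
      have e2 : seq ⟨k - 1, by omega⟩ ⟨a, by omega⟩
          = seq ⟨k - 1 - a, by omega⟩ ⟨0, by omega⟩ := by
        have e : seq ⟨k - 1, by omega⟩ = seq ⟨(k - 1 - a) + a, by omega⟩ :=
          fin_congr seq (by omega) (by omega) (by omega)
        rw [e, lemB a (by omega) (k - 1 - a) (by omega)]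
      have e3 : seq ⟨k - 1 - a, by omega⟩ = seq ⟨(k - 2 - a) + 1, by omega⟩ :=
        fin_congr seq (by omega) (by omega) (by omega)
      have hne := (htrans (k - 2 - a) (by omega)).1 (b + (k - 2 - a)) (by omega)
      have e4 : seq ⟨k - 2 - a, by omega⟩ ⟨b + (k - 2 - a), by omega⟩
          = c ⟨b, by omega⟩ := by
        rw [lemA (k - 2 - a) (by omega) (b + (k - 2 - a)) (by omega) (by omega)]
        exact fin_congr c (by omega) (by omega) (by omega)
      rw [e1, e2, e3]
      rw [e4] at hne
      intro hcon
      exact hne (hcon.trans (fin_congr c (by omega) (by omega) (by omega)))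
    · rw [← hlast', lemA (k - 1) (by omega) (k - 1) (by omega) (le_refl _)]
      exact fin_congr c (by omega) (by omega) (by omega)
  · rintro ⟨h1, h2⟩
    refine ⟨shiftSeq k c c', ?_, ?_, ?_, ?_⟩
    · funext j
      obtain ⟨j, hj⟩ := j
      have e0 : (0 : Fin (k - 1 + 1)) = ⟨0, by omega⟩ := rfl
      rw [e0, shiftSeq_pos k c c' 0 (by omega) j hj (by omega)]
      exact fin_congr c (by omega) hj (by omega)
    · funext j
      obtain ⟨j, hj⟩ := j
      have el : (Fin.last (k - 1)) = (⟨k - 1, by omega⟩ : Fin (k - 1 + 1)) := rfl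
      rw [el]
      by_cases hjc : j < k - 1
      · rw [shiftSeq_neg k c c' (k - 1) (by omega) j hj hjc]
        exact fin_congr c' (by omega) hj (by omega)
      · have hjk : j = k - 1 := by omega
        rw [shiftSeq_pos k c c' (k - 1) (by omega) j hj (by omega)]
        have e : c ⟨j - (k - 1), by omega⟩ = c ⟨0, by omega⟩ :=
          fin_congr c (by omega) (by omega) (by omega)
        rw [e, ← h2]
        exact fin_congr c' (by omega) hj (by omega)
    · intro t
      obtain ⟨t, ht⟩ := t
      have htl : t ≤ k - 1 := by omega
      constructor
      · intro x y hxy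
        obtain ⟨x, hxl⟩ := x
        obtain ⟨y, hyl⟩ := y
        by_cases hx : t ≤ x <;> by_cases hy : t ≤ y
        · rw [shiftSeq_pos k c c' t ht x hxl hx, shiftSeq_pos k c c' t ht y hyl hy] at hxy
          have hh : x - t = y - t := Fin.mk.inj_iff.mp (hc.1 hxy)
          exact Fin.ext (by simp; omega)
        · rw [shiftSeq_pos k c c' t ht x hxl hx,
            shiftSeq_neg k c c' t ht y hyl (by omega)] at hxy
          exact absurd (((fin_congr c' (by omega) (by omega) (by omega)).trans
              hxy.symm).trans (fin_congr c (by omega) (by omega) (by omega)))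
            (h1 (y + (k-1) - t + 1) (by omega) (by omega)
              (x - t + 1) (by omega) (by omega))
        · rw [shiftSeq_neg k c c' t ht x hxl (by omega),
            shiftSeq_pos k c c' t ht y hyl hy] at hxy
          exact absurd (((fin_congr c' (by omega) (by omega) (by omega)).trans
              hxy).trans (fin_congr c (by omega) (by omega) (by omega)))
            (h1 (x + (k-1) - t + 1) (by omega) (by omega)
              (y - t + 1) (by omega) (by omega))
        · rw [shiftSeq_neg k c c' t ht x hxl (by omega),
            shiftSeq_neg k c c' t ht y hyl (by omega)] at hxy
          have hh : x + (k-1) - t = y + (k-1) - t := Fin.mk.inj_iff.mp (hc'.1 hxy)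
          exact Fin.ext (by simp; omega)
      · intro i hi
        by_cases hx : t ≤ i
        · rw [shiftSeq_pos k c c' t ht i (by omega) hx,
            shiftSeq_pos k c c' t ht (i+1) hi (by omega)]
          have e2 : c ⟨i + 1 - t, by omega⟩ = c ⟨(i - t) + 1, by omega⟩ :=
            fin_congr c (by omega) (by omega) (by omega)
          rw [e2]
          exact hc.2 (i - t) (by omega)
        · by_cases hx2 : i + 1 < t
          · rw [shiftSeq_neg k c c' t ht i (by omega) (by omega),
              shiftSeq_neg k c c' t ht (i+1) hi (by omega)]
            have e2 : c' ⟨i + 1 + (k-1) - t, by omega⟩ = c' ⟨(i + (k-1) - t) + 1, by omega⟩ :=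
              fin_congr c' (by omega) (by omega) (by omega)
            rw [e2]
            exact hc'.2 (i + (k-1) - t) (by omega)
          · have hit : i + 1 = t := by omega
            have hk2 : 2 ≤ k := by omega
            rw [shiftSeq_neg k c c' t ht i (by omega) (by omega),
              shiftSeq_pos k c c' t ht (i+1) hi (by omega)]
            have e2 : c' ⟨i + (k-1) - t, by omega⟩ = c' ⟨k - 2, by omega⟩ :=
              fin_congr c' (by omega) (by omega) (by omega)
            have e3 : c ⟨i + 1 - t, by omega⟩ = c ⟨0, by omega⟩ :=
              fin_congr c (by omega) (by omega) (by omega)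
            rw [e2, e3, ← h2]
            have e4 : c' ⟨k - 1, by omega⟩ = c' ⟨(k - 2) + 1, by omega⟩ :=
              fin_congr c' (by omega) (by omega) (by omega)
            rw [e4]
            exact hc'.2 (k - 2) (by omega)
    · intro s hs
      have hs' : s < k - 1 := by omega
      constructor
      · intro m hm
        rw [shiftSeq_neg k c c' (s+1) hs 0 (by omega) (by omega)]
        have e1 : c' ⟨0 + (k-1) - (s+1), by omega⟩ = c' ⟨k - 2 - s, by omega⟩ :=
          fin_congr c' (by omega) (by omega) (by omega)
        rw [e1]
        by_cases hsm : s ≤ m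
        · rw [shiftSeq_pos k c c' s (by omega) m (by omega) hsm]
          intro heq
          exact (h1 (k - 1 - s) (by omega) (by omega) (m - s + 1) (by omega) (by omega))
            (((fin_congr c' (by omega) (by omega) (by omega)).trans heq).trans
              (fin_congr c (by omega) (by omega) (by omega)))
        · rw [shiftSeq_neg k c c' s (by omega) m (by omega) (by omega)]
          intro heq
          have hh : k - 2 - s = m + (k-1) - s := Fin.mk.inj_iff.mp (hc'.1 heq)
          omega
      · intro m hm
        by_cases hsm : s ≤ m
        · rw [shiftSeq_pos k c c' (s+1) hs (m+1) hm (by omega),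
            shiftSeq_pos k c c' s (by omega) m (by omega) hsm]
          exact fin_congr c (by omega) (by omega) (by omega)
        · rw [shiftSeq_neg k c c' (s+1) hs (m+1) hm (by omega),
            shiftSeq_neg k c c' s (by omega) m (by omega) (by omega)]
          exact fin_congr c' (by omega) (by omega) (by omega)
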